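/- Let N ≥ 1 be an integer, J = 2N, L > 0, δ > 0, τ ≥ 0, h = L/N, and set x_j = jh, y_k = kh. For λ_{pq} = π²(p²+q²)/L² − δ(π²(p²+q²)/L²)², and for any v : {1,…,J} × {1,…,J} → ℂ, define the discrete Fourier coefficients ṽ_{pq} = (1/J²) Σ_{j=1}^{J} Σ_{k=1}^{J} v_{j,k} exp(−iπ(p x_j + q y_k)/L) for p, q ∈ {−N, …, N−1}, and define w_{j,k} = Σ_{p=−N}^{N−1} Σ_{q=−N}^{N−1} exp(λ_{pq} τ) ṽ_{pq} exp(iπ(p x_j + q y_k)/L). Then h² Σ_{j,k=1}^{J} |w_{j,k}|² ≤ e^{τ/(2δ)} h² Σ_{j,k=1}^{J} |v_{j,k}|², i.e. ‖w‖ ≤ e^{τ/(4δ)} ‖v‖ in the discrete L²-norm ‖u‖ = (h² Σ_{j,k} |u_{j,k}|²)^{1/2}. -/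

import Mathlib

open Complex Finset

lemma sum_zpow_Icc (ζ : ℂ) (hζ : ζ ≠ 0) (a : ℤ) (J : ℕ) :
    ∑ n ∈ Finset.Icc a (a + J - 1), ζ ^ n = ζ ^ a * ∑ i ∈ Finset.range J, ζ ^ i := by
  induction J with
  | zero => simp [Finset.Icc_eq_empty_of_lt (by omega : a + (0:ℕ) - 1 < a)]
  | succ n ih =>
      have hins : Finset.Icc a (a + (n+1:ℕ) - 1) = insert (a + n) (Finset.Icc a (a + n - 1)) := by
        ext m; simp only [Finset.mem_Icc, Finset.mem_insert]; push_cast; omega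
      have hnm : (a + (n:ℤ)) ∉ Finset.Icc a (a + n - 1) := by
        simp only [Finset.mem_Icc]; omega
      rw [hins, Finset.sum_insert hnm, ih, Finset.sum_range_succ, mul_add,
        zpow_add₀ hζ, zpow_natCast]
      ring

lemma orth_sum (N : ℕ) (hN : 1 ≤ N) (m a : ℤ) (hm : |m| < 2 * N) :
    ∑ n ∈ Finset.Icc a (a + 2 * N - 1), Complex.exp (Complex.I * Real.pi * m / N * n)
      = if m = 0 then ((2 * N : ℕ) : ℂ) else 0 := by
  set ζ : ℂ := Complex.exp (Complex.I * Real.pi * m / N) with hζdef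
  have hζ0 : ζ ≠ 0 := Complex.exp_ne_zero _
  have hterm : ∀ n : ℤ, Complex.exp (Complex.I * Real.pi * m / N * n) = ζ ^ n := by
    intro n
    rw [hζdef, ← Complex.exp_int_mul, mul_comm]
  have := sum_zpow_Icc ζ hζ0 a (2 * N)
  rw [show (a + (2*N:ℕ) - 1 : ℤ) = a + 2*N - 1 by push_cast; ring] at this
  rw [Finset.sum_congr rfl (fun n _ => hterm n), this]
  by_cases hm0 : m = 0
  · subst hm0
    simp [hζdef]
  · have hζ1 : ζ ≠ 1 := by
      rw [hζdef]
      intro hcon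
      rw [Complex.exp_eq_one_iff] at hcon
      obtain ⟨k, hk⟩ := hcon
      have hNne : ((N:ℂ)) ≠ 0 := by exact_mod_cast (Nat.cast_ne_zero (R := ℂ)).mpr (by omega)
      have hπ : (Real.pi : ℂ) ≠ 0 := by exact_mod_cast Real.pi_ne_zero
      have hI : Complex.I ≠ 0 := Complex.I_ne_zero
      -- from I*π*m/N = k*(2π I), get m = 2 k N
      have : (m : ℂ) = 2 * k * N := by
        field_simp at hk
        have := hk
        -- I * π * m = k * (2 * π * I) * N
        have h2 : (Complex.I * Real.pi) * (m : ℂ) = (Complex.I * Real.pi) * (2 * k * N) := by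
          ring_nf
          ring_nf at this
          linear_combination (Complex.I * Real.pi) * this
        exact mul_left_cancel₀ (mul_ne_zero hI hπ) h2
      have hm2 : m = 2 * k * N := by exact_mod_cast this
      rcases eq_or_ne k 0 with hk0 | hk0
      · rw [hk0] at hm2; simp at hm2; exact hm0 hm2
      · have hk1 : (1:ℤ) ≤ |k| := Int.one_le_abs hk0
        have hNn : (0:ℤ) ≤ (N:ℤ) := by positivity
        have : (2 * N : ℤ) ≤ |m| := by
          rw [hm2, abs_mul, abs_mul, abs_of_nonneg (show (0:ℤ) ≤ 2 by norm_num),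
            abs_of_nonneg hNn]
          nlinarith
        omega
    have hζJ : ζ ^ (2 * N) = 1 := by
      rw [hζdef, ← Complex.exp_nat_mul]
      have : ((2 * N : ℕ) : ℂ) * (Complex.I * Real.pi * m / N) = m * (2 * Real.pi * Complex.I) := by
        have hNne : ((N:ℂ)) ≠ 0 := by
          exact_mod_cast (Nat.cast_ne_zero (R := ℂ)).mpr (by omega)
        field_simp
        push_cast
        ring
      rw [this, Complex.exp_int_mul_two_pi_mul_I]
    rw [geom_sum_eq hζ1, hζJ]
    simp [hm0]

lemma parseval_core {ι κ : Type*} [DecidableEq κ] (S : Finset ι) (T : Finset κ)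
    (F : κ → ι → ℂ) (c : κ → ℂ) (C : ℂ)
    (horth : ∀ p ∈ T, ∀ p' ∈ T,
      (∑ j ∈ S, F p j * (starRingEnd ℂ) (F p' j)) = if p = p' then C else 0) :
    ∑ j ∈ S, (∑ p ∈ T, c p * F p j) * (starRingEnd ℂ) (∑ p ∈ T, c p * F p j)
      = C * ∑ p ∈ T, c p * (starRingEnd ℂ) (c p) := by
  calc ∑ j ∈ S, (∑ p ∈ T, c p * F p j) * (starRingEnd ℂ) (∑ p ∈ T, c p * F p j)
      = ∑ j ∈ S, ∑ p ∈ T, ∑ p' ∈ T,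
          (c p * (starRingEnd ℂ) (c p')) * (F p j * (starRingEnd ℂ) (F p' j)) := by
        refine Finset.sum_congr rfl fun j _ => ?_
        rw [map_sum, Finset.sum_mul_sum]
        refine Finset.sum_congr rfl fun p _ => Finset.sum_congr rfl fun p' _ => ?_
        rw [map_mul]; ring
    _ = ∑ p ∈ T, ∑ p' ∈ T,
          (c p * (starRingEnd ℂ) (c p')) * ∑ j ∈ S, F p j * (starRingEnd ℂ) (F p' j) := by
        rw [Finset.sum_comm]
        refine Finset.sum_congr rfl fun p _ => ?_
        rw [Finset.sum_comm]
        exact Finset.sum_congr rfl fun p' _ => (Finset.mul_sum _ _ _).symm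
    _ = ∑ p ∈ T, ∑ p' ∈ T, (c p * (starRingEnd ℂ) (c p')) * (if p = p' then C else 0) := by
        refine Finset.sum_congr rfl fun p hp => Finset.sum_congr rfl fun p' hp' => ?_
        rw [horth p hp p' hp']
    _ = C * ∑ p ∈ T, c p * (starRingEnd ℂ) (c p) := by
        rw [Finset.mul_sum]
        refine Finset.sum_congr rfl fun p hp => ?_
        rw [Finset.sum_eq_single p]
        · simp; ring
        · intro b _ hb; simp [Ne.symm hb]
        · intro hcon; exact absurd hp hcon

noncomputable def charE (N : ℕ) (m : ℤ) : ℂ := Complex.exp (Complex.I * Real.pi * m / N)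

lemma charE_mul (N : ℕ) (m m' : ℤ) : charE N m * charE N m' = charE N (m + m') := by
  unfold charE
  rw [← Complex.exp_add]
  congr 1
  push_cast
  ring

lemma charE_conj (N : ℕ) (m : ℤ) : (starRingEnd ℂ) (charE N m) = charE N (-m) := by
  unfold charE
  rw [← Complex.exp_conj]
  congr 1
  simp only [map_div₀, map_mul, Complex.conj_I, map_intCast, map_natCast, Complex.conj_ofReal]
  push_cast
  ring

lemma charE_orth (N : ℕ) (hN : 1 ≤ N) (m a : ℤ) (hm : |m| < 2 * N) :
    ∑ n ∈ Finset.Icc a (a + 2 * N - 1), charE N (m * n) = if m = 0 then ((2 * N : ℕ) : ℂ) else 0 := by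
  rw [← orth_sum N hN m a hm]
  refine Finset.sum_congr rfl fun n _ => ?_
  unfold charE
  congr 1
  push_cast
  ring
/-- Stability of the pseudo-spectral solver of the linear subproblem
`u_t = −Δu − δΔ²u` (Lemma 3.3): if `w` is obtained from grid data `v` by taking the
discrete Fourier transform, multiplying each coefficient by `e^{λ_{pq}τ}`, and
transforming back, then `‖w‖ ≤ e^{τ/(4δ)} ‖v‖` in the discrete `L²`-norm, i.e.
`h² Σ |w_{j,k}|² ≤ e^{τ/(2δ)} h² Σ |v_{j,k}|²`. -/
theorem pseudo_spectral_stability (N : ℕ) (hN : 1 ≤ N) (L δ τ : ℝ)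
    (hL : 0 < L) (hδ : 0 < δ) (hτ : 0 ≤ τ)
    (h : ℝ) (hh : h = L / N)
    (x : ℤ → ℝ) (hx : ∀ j : ℤ, x j = j * h)
    (lam : ℤ → ℤ → ℝ)
    (hlam : ∀ p q : ℤ, lam p q =
      Real.pi ^ 2 * ((p : ℝ) ^ 2 + (q : ℝ) ^ 2) / L ^ 2
        - δ * (Real.pi ^ 2 * ((p : ℝ) ^ 2 + (q : ℝ) ^ 2) / L ^ 2) ^ 2)
    (v : ℤ → ℤ → ℂ)
    (vt : ℤ → ℤ → ℂ)
    (hvt : ∀ p q : ℤ, vt p q =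
      (1 / ((2 * N : ℕ) : ℂ) ^ 2) * ∑ j ∈ Finset.Icc (1 : ℤ) (2 * N), ∑ k ∈ Finset.Icc (1 : ℤ) (2 * N),
        v j k * Complex.exp (-(Complex.I * Real.pi * ((p : ℂ) * (x j : ℝ) + (q : ℂ) * (x k : ℝ)) / L)))
    (w : ℤ → ℤ → ℂ)
    (hw : ∀ j k : ℤ, w j k =
      ∑ p ∈ Finset.Icc (-(N : ℤ)) ((N : ℤ) - 1), ∑ q ∈ Finset.Icc (-(N : ℤ)) ((N : ℤ) - 1),
        (Real.exp (lam p q * τ) : ℂ) * vt p q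
          * Complex.exp (Complex.I * Real.pi * ((p : ℂ) * (x j : ℝ) + (q : ℂ) * (x k : ℝ)) / L)) :
    h ^ 2 * ∑ j ∈ Finset.Icc (1 : ℤ) (2 * N), ∑ k ∈ Finset.Icc (1 : ℤ) (2 * N), ‖w j k‖ ^ 2
      ≤ Real.exp (τ / (2 * δ))
        * (h ^ 2 * ∑ j ∈ Finset.Icc (1 : ℤ) (2 * N), ∑ k ∈ Finset.Icc (1 : ℤ) (2 * N), ‖v j k‖ ^ 2) := by
  have hNR : (0:ℝ) < N := by exact_mod_cast hN
  have hNC : ((N:ℂ)) ≠ 0 := by exact_mod_cast hNR.ne'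
  have hLC : ((L:ℂ)) ≠ 0 := by exact_mod_cast hL.ne'
  set A : Finset ℤ := Finset.Icc (1 : ℤ) (2 * N) with hA
  set B : Finset ℤ := Finset.Icc (-(N : ℤ)) ((N : ℤ) - 1) with hB
  -- factorization of the exponentials in the statement
  have key : ∀ p q j k : ℤ,
      Complex.exp (Complex.I * Real.pi * ((p : ℂ) * ((x j : ℝ) : ℂ) + (q : ℂ) * ((x k : ℝ) : ℂ)) / L)
        = charE N (p * j) * charE N (q * k) := by
    intro p q j k
    rw [charE_mul]
    unfold charE
    rw [hx j, hx k, hh]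
    congr 1
    push_cast
    field_simp
  have keyneg : ∀ p q j k : ℤ,
      Complex.exp (-(Complex.I * Real.pi * ((p : ℂ) * ((x j : ℝ) : ℂ) + (q : ℂ) * ((x k : ℝ) : ℂ)) / L))
        = charE N (-(p * j)) * charE N (-(q * k)) := by
    intro p q j k
    rw [charE_mul]
    unfold charE
    rw [hx j, hx k, hh]
    congr 1
    push_cast
    field_simp
    ring
  -- orthogonality over the spatial grid
  have horthA : ∀ p ∈ B, ∀ p' ∈ B,
      (∑ j ∈ A, charE N (p * j) * (starRingEnd ℂ) (charE N (p' * j)))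
        = if p = p' then ((2 * N : ℕ) : ℂ) else 0 := by
    intro p hp p' hp'
    rw [hB, Finset.mem_Icc] at hp hp'
    have hterm : ∀ j : ℤ, charE N (p * j) * (starRingEnd ℂ) (charE N (p' * j))
        = charE N ((p - p') * j) := by
      intro j
      rw [charE_conj, charE_mul]
      congr 1
      ring
    rw [Finset.sum_congr rfl fun j _ => hterm j]
    have hAeq : A = Finset.Icc (1 : ℤ) (1 + 2 * N - 1) := by rw [hA]; congr 1; ring
    rw [hAeq, charE_orth N hN (p - p') 1 (by rw [abs_lt]; omega)]
    simp [sub_eq_zero]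
  -- orthogonality over the frequency grid
  have horthB : ∀ j ∈ A, ∀ j' ∈ A,
      (∑ p ∈ B, charE N (-(j * p)) * (starRingEnd ℂ) (charE N (-(j' * p))))
        = if j = j' then ((2 * N : ℕ) : ℂ) else 0 := by
    intro j hj j' hj'
    rw [hA, Finset.mem_Icc] at hj hj'
    have hterm : ∀ p : ℤ, charE N (-(j * p)) * (starRingEnd ℂ) (charE N (-(j' * p)))
        = charE N ((j' - j) * p) := by
      intro p
      rw [charE_conj, charE_mul]
      congr 1
      ring
    rw [Finset.sum_congr rfl fun p _ => hterm p]
    have hBeq : B = Finset.Icc (-(N : ℤ)) (-(N : ℤ) + 2 * N - 1) := by rw [hB]; congr 1; ring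
    rw [hBeq, charE_orth N hN (j' - j) (-(N:ℤ)) (by rw [abs_lt]; omega)]
    exact if_congr (by omega) rfl rfl
  have hJne : ((2 * N : ℕ) : ℂ) ≠ 0 := by exact_mod_cast (by omega : 2 * N ≠ 0)
  -- product orthogonality, w-side
  have horthA2 : ∀ y ∈ B ×ˢ B, ∀ y' ∈ B ×ˢ B,
      (∑ z ∈ A ×ˢ A, (charE N (y.1 * z.1) * charE N (y.2 * z.2))
          * (starRingEnd ℂ) (charE N (y'.1 * z.1) * charE N (y'.2 * z.2)))
        = if y = y' then ((2 * N : ℕ) : ℂ) ^ 2 else 0 := by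
    intro y hy y' hy'
    rw [Finset.mem_product] at hy hy'
    rw [Finset.sum_product]
    have hterm : ∀ z1 ∈ A, ∀ z2 ∈ A,
        (charE N (y.1 * z1) * charE N (y.2 * z2))
            * (starRingEnd ℂ) (charE N (y'.1 * z1) * charE N (y'.2 * z2))
          = (charE N (y.1 * z1) * (starRingEnd ℂ) (charE N (y'.1 * z1)))
              * (charE N (y.2 * z2) * (starRingEnd ℂ) (charE N (y'.2 * z2))) := by
      intro z1 _ z2 _
      rw [map_mul]
      ring
    rw [Finset.sum_congr rfl fun z1 hz1 => Finset.sum_congr rfl fun z2 hz2 => hterm z1 hz1 z2 hz2,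
      ← Finset.sum_mul_sum, horthA _ hy.1 _ hy'.1, horthA _ hy.2 _ hy'.2]
    by_cases h1 : y.1 = y'.1 <;> by_cases h2 : y.2 = y'.2 <;>
      simp [h1, h2, Prod.ext_iff, sq]
  have horthB2 : ∀ y ∈ A ×ˢ A, ∀ y' ∈ A ×ˢ A,
      (∑ z ∈ B ×ˢ B, (charE N (-(y.1 * z.1)) * charE N (-(y.2 * z.2)))
          * (starRingEnd ℂ) (charE N (-(y'.1 * z.1)) * charE N (-(y'.2 * z.2))))
        = if y = y' then ((2 * N : ℕ) : ℂ) ^ 2 else 0 := by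
    intro y hy y' hy'
    rw [Finset.mem_product] at hy hy'
    rw [Finset.sum_product]
    have hterm : ∀ z1 ∈ B, ∀ z2 ∈ B,
        (charE N (-(y.1 * z1)) * charE N (-(y.2 * z2)))
            * (starRingEnd ℂ) (charE N (-(y'.1 * z1)) * charE N (-(y'.2 * z2)))
          = (charE N (-(y.1 * z1)) * (starRingEnd ℂ) (charE N (-(y'.1 * z1))))
              * (charE N (-(y.2 * z2)) * (starRingEnd ℂ) (charE N (-(y'.2 * z2)))) := by
      intro z1 _ z2 _
      rw [map_mul]
      ring
    rw [Finset.sum_congr rfl fun z1 hz1 => Finset.sum_congr rfl fun z2 hz2 => hterm z1 hz1 z2 hz2,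
      ← Finset.sum_mul_sum, horthB _ hy.1 _ hy'.1, horthB _ hy.2 _ hy'.2]
    by_cases h1 : y.1 = y'.1 <;> by_cases h2 : y.2 = y'.2 <;>
      simp [h1, h2, Prod.ext_iff, sq]
  -- Parseval for w
  have E1 := parseval_core (A ×ˢ A) (B ×ˢ B)
    (fun y z => charE N (y.1 * z.1) * charE N (y.2 * z.2))
    (fun y => ((Real.exp (lam y.1 y.2 * τ) : ℝ) : ℂ) * vt y.1 y.2)
    (((2 * N : ℕ) : ℂ) ^ 2) horthA2
  have hwz : ∀ z : ℤ × ℤ,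
      (∑ p ∈ B ×ˢ B, ((Real.exp (lam p.1 p.2 * τ) : ℝ) : ℂ) * vt p.1 p.2
        * (charE N (p.1 * z.1) * charE N (p.2 * z.2))) = w z.1 z.2 := by
    intro z
    rw [Finset.sum_product, hw z.1 z.2]
    refine Finset.sum_congr rfl fun p _ => Finset.sum_congr rfl fun q _ => ?_
    rw [key p q z.1 z.2]
  simp only [hwz] at E1
  -- Parseval for v
  have E2 := parseval_core (B ×ˢ B) (A ×ˢ A)
    (fun y z => charE N (-(y.1 * z.1)) * charE N (-(y.2 * z.2)))
    (fun y => v y.1 y.2)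
    (((2 * N : ℕ) : ℂ) ^ 2) horthB2
  have hgz : ∀ z : ℤ × ℤ,
      (∑ p ∈ A ×ˢ A, v p.1 p.2 * (charE N (-(p.1 * z.1)) * charE N (-(p.2 * z.2))))
        = ((2 * N : ℕ) : ℂ) ^ 2 * vt z.1 z.2 := by
    intro z
    rw [Finset.sum_product, hvt z.1 z.2, ← mul_assoc, mul_one_div,
      div_self (pow_ne_zero 2 hJne), one_mul]
    refine Finset.sum_congr rfl fun j _ => Finset.sum_congr rfl fun k _ => ?_
    rw [keyneg z.1 z.2 j k, mul_comm z.1 j, mul_comm z.2 k]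
  simp only [hgz] at E2
  -- extract real statements
  set R : ℝ := ((2 * N : ℕ) : ℝ) with hR
  have hRpos : (0:ℝ) < R := by rw [hR]; exact_mod_cast (by omega : 0 < 2 * N)
  have hJR : ((2 * N : ℕ) : ℂ) = ((R:ℝ):ℂ) := by rw [hR]; norm_num
  have P1 : (∑ z ∈ A ×ˢ A, (‖w z.1 z.2‖ : ℝ) ^ 2)
      = R ^ 2 * ∑ y ∈ B ×ˢ B, ‖((Real.exp (lam y.1 y.2 * τ) : ℝ) : ℂ) * vt y.1 y.2‖ ^ 2 := by
    have h1 := E1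
    simp only [Complex.mul_conj'] at h1
    rw [hJR] at h1
    exact_mod_cast h1
  have h2 := E2
  simp only [Complex.mul_conj'] at h2
  have h2r : ∑ z ∈ B ×ˢ B, ‖((2 * N : ℕ) : ℂ) ^ 2 * vt z.1 z.2‖ ^ 2
      = R ^ 2 * ∑ y ∈ A ×ˢ A, ‖v y.1 y.2‖ ^ 2 := by
    rw [hR]
    exact_mod_cast h2
  have hpt : ∀ z : ℤ × ℤ, ‖((2 * N : ℕ) : ℂ) ^ 2 * vt z.1 z.2‖ ^ 2
      = R ^ 4 * ‖vt z.1 z.2‖ ^ 2 := by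
    intro z
    have hnJ : ‖((2 * N : ℕ) : ℂ)‖ = R := by
      rw [hJR, Complex.norm_real, Real.norm_eq_abs, abs_of_pos hRpos]
    rw [norm_mul, norm_pow, hnJ, mul_pow]
    ring
  have P2' : R ^ 2 * ∑ z ∈ B ×ˢ B, (‖vt z.1 z.2‖ : ℝ) ^ 2
      = ∑ y ∈ A ×ˢ A, (‖v y.1 y.2‖ : ℝ) ^ 2 := by
    simp only [hpt] at h2r
    rw [← Finset.mul_sum] at h2r
    refine mul_left_cancel₀ (pow_ne_zero 2 hRpos.ne') ?_
    calc R ^ 2 * (R ^ 2 * ∑ z ∈ B ×ˢ B, (‖vt z.1 z.2‖ : ℝ) ^ 2)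
        = R ^ 4 * ∑ z ∈ B ×ˢ B, (‖vt z.1 z.2‖ : ℝ) ^ 2 := by ring
      _ = R ^ 2 * ∑ y ∈ A ×ˢ A, (‖v y.1 y.2‖ : ℝ) ^ 2 := h2r
  -- pointwise bound on the multiplier
  have Pb : ∀ y : ℤ × ℤ,
      ‖((Real.exp (lam y.1 y.2 * τ) : ℝ) : ℂ) * vt y.1 y.2‖ ^ 2
        ≤ Real.exp (τ / (2 * δ)) * ‖vt y.1 y.2‖ ^ 2 := by
    intro y
    have hlam_le : lam y.1 y.2 ≤ 1 / (4 * δ) := by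
      rw [hlam]
      set s : ℝ := Real.pi ^ 2 * ((y.1 : ℝ) ^ 2 + (y.2 : ℝ) ^ 2) / L ^ 2 with hs
      rw [le_div_iff₀ (by linarith : (0:ℝ) < 4 * δ)]
      nlinarith [sq_nonneg (2 * δ * s - 1)]
    have hexp2 : 2 * (lam y.1 y.2 * τ) ≤ τ / (2 * δ) := by
      have h2l : 2 * lam y.1 y.2 ≤ 1 / (2 * δ) := by
        rw [le_div_iff₀ (by linarith : (0:ℝ) < 2 * δ)]
        rw [le_div_iff₀ (by linarith : (0:ℝ) < 4 * δ)] at hlam_le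
        nlinarith
      calc 2 * (lam y.1 y.2 * τ) = (2 * lam y.1 y.2) * τ := by ring
        _ ≤ (1 / (2 * δ)) * τ := mul_le_mul_of_nonneg_right h2l hτ
        _ = τ / (2 * δ) := by ring
    have hnorm : ‖((Real.exp (lam y.1 y.2 * τ) : ℝ) : ℂ) * vt y.1 y.2‖ ^ 2
        = Real.exp (2 * (lam y.1 y.2 * τ)) * ‖vt y.1 y.2‖ ^ 2 := by
      rw [norm_mul, Complex.norm_real, Real.norm_eq_abs, abs_of_pos (Real.exp_pos _), mul_pow,
        ← Real.exp_nat_mul]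
      norm_num
    rw [hnorm]
    exact mul_le_mul_of_nonneg_right (Real.exp_le_exp.mpr hexp2) (sq_nonneg _)
  -- combine
  have main : (∑ z ∈ A ×ˢ A, ‖w z.1 z.2‖ ^ 2)
      ≤ Real.exp (τ / (2 * δ)) * ∑ y ∈ A ×ˢ A, ‖v y.1 y.2‖ ^ 2 := by
    rw [P1, ← P2', Finset.mul_sum, Finset.mul_sum, Finset.mul_sum]
    refine Finset.sum_le_sum fun y hy => ?_
    have hb := Pb y
    nlinarith [sq_nonneg ‖vt y.1 y.2‖, sq_nonneg R, hb, hRpos]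
  simp only [Finset.sum_product] at main
  have hh2 : (0:ℝ) ≤ h ^ 2 := sq_nonneg h
  calc h ^ 2 * ∑ j ∈ A, ∑ k ∈ A, ‖w j k‖ ^ 2
      ≤ h ^ 2 * (Real.exp (τ / (2 * δ)) * ∑ j ∈ A, ∑ k ∈ A, ‖v j k‖ ^ 2) :=
        mul_le_mul_of_nonneg_left main hh2
    _ = Real.exp (τ / (2 * δ)) * (h ^ 2 * ∑ j ∈ A, ∑ k ∈ A, ‖v j k‖ ^ 2) := by ring
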